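/- For R > 0 and a complex number z, (2/π) ∫_{D(R)} log|1 - z/w| dm₂(w) equals |z|² if |z| < R, and equals R² + 2R² log(|z|/R) if |z| ≥ R. -/

import Mathlib

open MeasureTheory

section StmtAux
open Set Real intervalIntegral

noncomputable def cexpI (θ : ℝ) : ℂ := Complex.exp (θ * Complex.I)

lemma abs_log_le {t : ℝ} (ht : 0 ≤ t) : |Real.log t| ≤ t + 2 * t ^ (-2⁻¹ : ℝ) := by
  rcases eq_or_lt_of_le ht with h | h
  · simp [← h]
  · have h1 : Real.log t ≤ t := (Real.log_le_sub_one_of_pos h).trans (by linarith)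
    have h2 : -Real.log t ≤ 2 * t ^ (-2⁻¹ : ℝ) := by
      have := Real.log_le_sub_one_of_pos (Real.rpow_pos_of_pos h (-2⁻¹ : ℝ))
      rw [Real.log_rpow h] at this
      nlinarith [Real.rpow_pos_of_pos h (-2⁻¹ : ℝ)]
    have h3 : (0:ℝ) ≤ t ^ (-2⁻¹ : ℝ) := Real.rpow_nonneg ht _
    rw [abs_le]; constructor <;> nlinarith

lemma intInt_abs_rpow (c a b : ℝ) :
    IntervalIntegrable (fun x => |x - c| ^ (-2⁻¹:ℝ)) volume a b := by
  have h0 : ∀ v : ℝ, 0 ≤ v → IntervalIntegrable (fun x : ℝ => |x| ^ (-2⁻¹:ℝ)) volume 0 v := by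
    intro v hv
    have h := intervalIntegrable_rpow' (a := 0) (b := v) (r := (-2⁻¹:ℝ)) (by norm_num)
    rw [intervalIntegrable_iff] at h ⊢
    refine h.congr_fun ?_ measurableSet_uIoc
    intro x hx
    rw [uIoc_of_le hv] at hx
    simp [abs_of_pos hx.1]
  have half : ∀ u : ℝ, IntervalIntegrable (fun x : ℝ => |x| ^ (-2⁻¹:ℝ)) volume 0 u := by
    intro u
    rcases le_total 0 u with hu | hu
    · exact h0 u hu
    · have h := ((IntervalIntegrable.iff_comp_neg (by simp)).mp (h0 (-u) (by linarith)))
      simp only [abs_neg, neg_zero, neg_neg] at h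
      exact h
  have base : IntervalIntegrable (fun x : ℝ => |x| ^ (-2⁻¹:ℝ)) volume (a - c) (b - c) :=
    (half (a - c)).symm.trans (half (b - c))
  simpa using base.comp_sub_right c

lemma re_pos_aux (a : ℂ) (ha : norm a < 1) (θ : ℝ) : 0 < (1 - a * cexpI θ).re := by
  have h1 : norm (a * cexpI θ) < 1 := by
    rw [norm_mul, cexpI, Complex.norm_exp_ofReal_mul_I]; simpa using ha
  have h2 := (abs_le.mp (Complex.abs_re_le_norm (a * cexpI θ))).2
  simp only [Complex.sub_re, Complex.one_re]
  linarith

lemma ne_zero_aux (a : ℂ) (ha : norm a < 1) (θ : ℝ) : (1 - a * cexpI θ) ≠ 0 := by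
  intro h
  have := re_pos_aux a ha θ
  rw [h] at this; simp at this

lemma cont_cexpI : Continuous fun θ : ℝ => cexpI θ :=
  Complex.continuous_exp.comp (Complex.continuous_ofReal.mul continuous_const)

lemma contG (a : ℂ) (ha : norm a < 1) :
    Continuous fun θ : ℝ => Real.log (norm (1 - a * cexpI θ)) := by
  have hc : Continuous fun θ : ℝ => norm (1 - a * cexpI θ) :=
    continuous_norm.comp (continuous_const.sub (continuous_const.mul cont_cexpI))
  rw [continuous_iff_continuousAt]
  intro θ
  exact (Real.continuousAt_log (by simp only [ne_eq, norm_eq_zero]; exact ne_zero_aux a ha θ)).comp hc.continuousAt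

lemma lemA (a : ℂ) (ha : norm a < 1) :
    (∫ θ in (-π)..π, Real.log (norm (1 - a * cexpI θ))) = 0 := by
  set f : ℂ → ℂ := fun w => Complex.log (1 - a * w) with hf
  -- Cauchy integral formula
  have hmem : ∀ w : ℂ, norm w ≤ 1 → 0 < (1 - a * w).re := by
    intro w hw
    have h1 : norm (a * w) < 1 := by
      rw [norm_mul]
      calc norm a * norm w ≤ norm a * 1 :=
            mul_le_mul_of_nonneg_left hw (norm_nonneg a)
        _ < 1 := by simpa using ha
    have h2 := (abs_le.mp (Complex.abs_re_le_norm (a * w))).2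
    simp only [Complex.sub_re, Complex.one_re]; linarith
  have hdc : DiffContOnCl ℂ f (Metric.ball 0 1) := by
    constructor
    · intro w hw
      refine ((Complex.differentiableAt_log ?_).comp w
        (((differentiable_const a).mul differentiable_id).const_sub 1).differentiableAt).differentiableWithinAt
      exact Complex.mem_slitPlane_iff.mpr <| Or.inl (hmem w (le_of_lt (by simpa using hw)))
    · rw [closure_ball (0:ℂ) one_ne_zero]
      intro w hw
      refine ((continuousAt_clog ?_).comp
        ((continuous_const.sub (continuous_const.mul continuous_id)).continuousAt)).continuousWithinAt
      exact Complex.mem_slitPlane_iff.mpr <| Or.inl (hmem w (by simpa using hw))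
  have hC := hdc.circleIntegral_sub_inv_smul (w := 0) (by simp)
  have hf0 : f 0 = 0 := by simp [hf]
  rw [hf0, smul_zero] at hC
  -- unfold circle integral
  rw [circleIntegral] at hC
  simp only [deriv_circleMap, circleMap, Complex.ofReal_one, zero_add, one_mul, sub_zero,
    smul_eq_mul] at hC
  have hint : IntervalIntegrable (fun θ : ℝ => f (cexpI θ)) volume 0 (2 * π) := by
    refine Continuous.intervalIntegrable ?_ _ _
    rw [continuous_iff_continuousAt]
    intro θ
    refine (continuousAt_clog ?_).comp
      ((continuous_const.sub (continuous_const.mul cont_cexpI)).continuousAt)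
    exact Complex.mem_slitPlane_iff.mpr <| Or.inl (re_pos_aux a ha θ)
  have key : (∫ θ in (0:ℝ)..(2*π), f (cexpI θ)) = 0 := by
    have h2 : (∫ θ in (0:ℝ)..(2*π), Complex.I * f (cexpI θ)) = 0 := by
      rw [← hC]
      refine intervalIntegral.integral_congr fun θ _ => ?_
      have hne : cexpI θ ≠ 0 := Complex.exp_ne_zero _
      rw [cexpI]
      field_simp [hf]
    rw [intervalIntegral.integral_const_mul] at h2
    simpa [Complex.I_ne_zero] using h2
  -- take real parts
  have hre : (∫ θ in (0:ℝ)..(2*π), Real.log (norm (1 - a * cexpI θ))) = 0 := by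
    have := Complex.reCLM.intervalIntegral_comp_comm hint
    rw [key] at this
    simpa [hf, Complex.log_re] using this
  -- periodicity
  have hper : Function.Periodic (fun θ : ℝ => Real.log (norm (1 - a * cexpI θ))) (2*π) := by
    intro x
    simp only [cexpI]
    congr 3
    push_cast
    rw [add_mul, Complex.exp_add]
    simp [Complex.exp_two_pi_mul_I]
  have := hper.intervalIntegral_add_eq (-π) 0
  simp only [zero_add] at this
  rw [show -π + 2*π = π by ring] at this
  rw [this, hre]

lemma abs_cexpI (θ : ℝ) : norm (cexpI θ) = 1 := Complex.norm_exp_ofReal_mul_I θ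

lemma cexpI_ne_zero (θ : ℝ) : cexpI θ ≠ 0 := Complex.exp_ne_zero _

lemma inner_lt {z : ℂ} {r : ℝ} (hr : 0 < r) (hz : z ≠ 0) (hlt : r < norm z) :
    (∫ θ in Ioo (-π) π, Real.log (norm (1 - z / (r * cexpI θ))))
      = 2*π*(Real.log (norm z) - Real.log r) := by
  have hπ : -π ≤ π := by linarith [Real.pi_pos]
  set a : ℂ := (r:ℂ)/z with haa
  have ha : norm a < 1 := by
    rw [haa, norm_div, Complex.norm_real, Real.norm_eq_abs, abs_of_pos hr, div_lt_one (norm_pos_iff.mpr hz)]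
    exact hlt
  have hz0 : norm z ≠ 0 := by simpa using hz
  have key : ∀ θ : ℝ, Real.log (norm (1 - z / (r * cexpI θ)))
      = Real.log (norm z / r) + Real.log (norm (1 - a * cexpI θ)) := by
    intro θ
    have h1 : (1 - z/((r:ℂ)*cexpI θ)) = -(z/((r:ℂ)*cexpI θ)) * (1 - a * cexpI θ) := by
      rw [haa]
      field_simp [cexpI_ne_zero θ, hz, Complex.ofReal_ne_zero.mpr hr.ne']
      ring
    rw [h1, norm_mul, norm_neg, norm_div, norm_mul, abs_cexpI, Complex.norm_real, Real.norm_eq_abs,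
      abs_of_pos hr, mul_one, Real.log_mul (by positivity)
        (norm_ne_zero_iff.mpr (ne_zero_aux a ha θ))]
  rw [← integral_Ioc_eq_integral_Ioo, ← intervalIntegral.integral_of_le hπ]
  rw [intervalIntegral.integral_congr (fun θ _ => key θ)]
  rw [intervalIntegral.integral_add (intervalIntegrable_const) ((contG a ha).intervalIntegrable _ _),
    lemA a ha, intervalIntegral.integral_const, add_zero, smul_eq_mul,
    Real.log_div hz0 hr.ne']
  ring

lemma inner_gt {z : ℂ} {r : ℝ} (hr : 0 < r) (hgt : norm z < r) :
    (∫ θ in Ioo (-π) π, Real.log (norm (1 - z / (r * cexpI θ)))) = 0 := by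
  have hπ : -π ≤ π := by linarith [Real.pi_pos]
  set b : ℂ := z/(r:ℂ) with hbb
  have hb : norm b < 1 := by
    rw [hbb, norm_div, Complex.norm_real, Real.norm_eq_abs, abs_of_pos hr, div_lt_one hr]
    exact hgt
  have key : ∀ θ : ℝ, Real.log (norm (1 - z / (r * cexpI θ)))
      = Real.log (norm (1 - b * cexpI (-θ))) := by
    intro θ
    congr 2
    rw [hbb, cexpI, cexpI]
    push_cast
    rw [neg_mul, Complex.exp_neg]
    field_simp
  rw [← integral_Ioc_eq_integral_Ioo, ← intervalIntegral.integral_of_le hπ]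
  rw [intervalIntegral.integral_congr (fun θ _ => key θ)]
  rw [intervalIntegral.integral_comp_neg (fun θ => Real.log (norm (1 - b * cexpI θ)))]
  rw [neg_neg]
  exact lemA b hb

lemma meas_h (z : ℂ) : Measurable (fun p : ℝ×ℝ =>
    p.1 * Real.log (norm (1 - z / (p.1 * cexpI p.2)))) := by
  apply measurable_fst.mul
  apply Real.measurable_log.comp
  have hm : Measurable fun p : ℝ×ℝ => (p.1 : ℂ) * cexpI p.2 :=
    (Complex.measurable_ofReal.comp measurable_fst).mul (cont_cexpI.measurable.comp measurable_snd)
  exact continuous_norm.measurable.comp (measurable_const.sub (hm.const_div z))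

lemma integrable_main (R : ℝ) (hR : 0 < R) (z : ℂ) :
    Integrable (fun p : ℝ×ℝ => p.1 * Real.log (norm (1 - z / (p.1 * cexpI p.2))))
      ((volume.restrict (Ioo 0 R)).prod (volume.restrict (Ioo (-π) π))) := by
  set ρ := norm z with hρ
  set μ := volume.restrict (Ioo (0:ℝ) R) with hμ
  set ν := volume.restrict (Ioo (-π) π) with hν
  haveI : IsFiniteMeasure ν := ⟨by rw [hν, Measure.restrict_apply_univ]; simp⟩
  haveI : IsFiniteMeasure μ := ⟨by rw [hμ, Measure.restrict_apply_univ]; simp⟩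
  set C : ℝ := 2 * R * R ^ (2⁻¹:ℝ) with hC
  set g₁ : ℝ → ℝ := fun r => (R + ρ) + C * |r - ρ| ^ (-2⁻¹:ℝ) with hg₁
  have hg₁i : Integrable g₁ μ := by
    refine (integrable_const _).add ?_
    have := (intInt_abs_rpow ρ 0 R)
    rw [intervalIntegrable_iff_integrableOn_Ioo_of_le hR.le] at this
    exact (this.const_mul C)
  have hgi : Integrable (fun p : ℝ×ℝ => g₁ p.1) (μ.prod ν) := by
    rw [integrable_prod_iff ((hg₁i.aestronglyMeasurable).comp_fst)]
    constructor
    · exact Filter.Eventually.of_forall fun x => integrable_const (g₁ x)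
    · simp only [MeasureTheory.integral_const]
      exact (hg₁i.norm.smul ((ν univ).toReal)).congr (Filter.Eventually.of_forall fun x => by
        simp [smul_eq_mul, measureReal_def])
  refine hgi.mono' ((meas_h z).aestronglyMeasurable) ?_
  -- a.e. bound
  have hmeq : μ.prod ν = (volume.prod volume).restrict ((Ioo (0:ℝ) R) ×ˢ (Ioo (-π) π)) :=
    Measure.prod_restrict _ _
  have hmem : ∀ᵐ p : ℝ×ℝ ∂(μ.prod ν), p ∈ (Ioo (0:ℝ) R) ×ˢ (Ioo (-π) π) := by
    rw [hmeq]; exact ae_restrict_mem (measurableSet_Ioo.prod measurableSet_Ioo)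
  have hne : ∀ᵐ p : ℝ×ℝ ∂(μ.prod ν), p.1 ≠ ρ := by
    rw [hmeq]
    refine ae_restrict_of_ae ?_
    rw [ae_iff]
    have : {p : ℝ×ℝ | ¬ p.1 ≠ ρ} = ({ρ} : Set ℝ) ×ˢ (univ : Set ℝ) := by
      ext p; simp [eq_comm, Prod.ext_iff]
    rw [this, Measure.prod_prod]
    simp
  filter_upwards [hmem, hne] with p hp hpne
  obtain ⟨hp1, hp2⟩ := hp
  set r := p.1
  set θ := p.2
  have hr : 0 < r := hp1.1
  have hrR : r < R := hp1.2
  have hw : ((r:ℂ) * cexpI θ) ≠ 0 := by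
    exact mul_ne_zero (Complex.ofReal_ne_zero.mpr hr.ne') (cexpI_ne_zero θ)
  set s := norm ((r:ℂ) * cexpI θ - z) with hs
  have habs : norm (1 - z / ((r:ℂ) * cexpI θ)) = s / r := by
    rw [show (1 : ℂ) - z / ((r:ℂ) * cexpI θ) = ((r:ℂ) * cexpI θ - z) / ((r:ℂ) * cexpI θ) by
      rw [sub_div, div_self hw]]
    rw [norm_div, norm_mul, abs_cexpI, Complex.norm_real, Real.norm_eq_abs, abs_of_pos hr, mul_one]
  have hsub : |r - ρ| ≤ s := by
    have := abs_norm_sub_norm_le ((r:ℂ) * cexpI θ) z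
    simpa [norm_mul, abs_cexpI, Complex.norm_real, Real.norm_eq_abs, abs_of_pos hr] using this
  have hrρ : 0 < |r - ρ| := abs_pos.mpr (sub_ne_zero.mpr hpne)
  have hs0 : 0 < s := lt_of_lt_of_le hrρ hsub
  have hsle : s ≤ R + ρ := by
    have := norm_sub_le ((r:ℂ) * cexpI θ) z
    simp only [norm_mul, abs_cexpI, Complex.norm_real, Real.norm_eq_abs, abs_of_pos hr,
      mul_one] at this
    rw [hs]
    linarith
  have ht : (0:ℝ) ≤ s / r := by positivity
  have hlog := abs_log_le ht
  have h1 : ‖r * Real.log (norm (1 - z / ((r:ℂ) * cexpI θ)))‖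
      = r * |Real.log (s/r)| := by
    rw [habs, Real.norm_eq_abs, abs_mul, abs_of_pos hr]
  have hrpow : (s/r) ^ (-2⁻¹:ℝ) = r ^ (2⁻¹:ℝ) * s ^ (-2⁻¹:ℝ) := by
    rw [Real.div_rpow hs0.le hr.le, Real.rpow_neg hs0.le, Real.rpow_neg hr.le]
    field_simp
  have hspow : s ^ (-2⁻¹:ℝ) ≤ |r - ρ| ^ (-2⁻¹:ℝ) := by
    rw [Real.rpow_neg hs0.le, Real.rpow_neg (abs_nonneg _)]
    exact inv_anti₀ (Real.rpow_pos_of_pos hrρ _)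
      (Real.rpow_le_rpow (abs_nonneg _) hsub (by norm_num))
  have hrr : r ^ (2⁻¹:ℝ) ≤ R ^ (2⁻¹:ℝ) := Real.rpow_le_rpow hr.le (le_of_lt hrR) (by norm_num)
  have hpos1 : (0:ℝ) ≤ s ^ (-2⁻¹:ℝ) := Real.rpow_nonneg hs0.le _
  have hpos2 : (0:ℝ) ≤ r ^ (2⁻¹:ℝ) := Real.rpow_nonneg hr.le _
  have hpos3 : (0:ℝ) ≤ |r - ρ| ^ (-2⁻¹:ℝ) := Real.rpow_nonneg (abs_nonneg _) _
  have hpos4 : (0:ℝ) ≤ R ^ (2⁻¹:ℝ) := Real.rpow_nonneg hR.le _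
  calc ‖r * Real.log (norm (1 - z / ((r:ℂ) * cexpI θ)))‖
      = r * |Real.log (s/r)| := h1
    _ ≤ r * (s/r + 2 * (s/r) ^ (-2⁻¹:ℝ)) := by
        exact mul_le_mul_of_nonneg_left hlog hr.le
    _ = s + 2 * r * r ^ (2⁻¹:ℝ) * s ^ (-2⁻¹:ℝ) := by
        rw [hrpow]; field_simp
    _ ≤ (R + ρ) + C * |r - ρ| ^ (-2⁻¹:ℝ) := by
        rw [hC]
        have : 2 * r * r ^ (2⁻¹:ℝ) * s ^ (-2⁻¹:ℝ) ≤ 2 * R * R ^ (2⁻¹:ℝ) * |r - ρ| ^ (-2⁻¹:ℝ) := by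
          have e1 : 2 * r * r ^ (2⁻¹:ℝ) ≤ 2 * R * R ^ (2⁻¹:ℝ) := by nlinarith
          have e2 : (0:ℝ) ≤ 2 * r * r ^ (2⁻¹:ℝ) := by positivity
          exact mul_le_mul e1 hspow hpos1 (by positivity)
        linarith

lemma ftc (c : ℝ) (m : ℝ) (hm : 0 < m) :
    ∫ r in (0:ℝ)..m, (r * c - r * Real.log r)
      = m^2/2*(c - Real.log m) + m^2/4 := by
  set F : ℝ → ℝ := fun r => r^2/2*c + r^2/4 - (1/2)*(r*(r*Real.log r)) with hF
  have hcont : ContinuousOn F (Icc 0 m) := by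
    refine Continuous.continuousOn ?_
    exact (((continuous_pow 2).div_const 2 |>.mul continuous_const).add
      ((continuous_pow 2).div_const 4)).sub
      (continuous_const.mul (continuous_id.mul Real.continuous_mul_log))
  have hderiv : ∀ r ∈ Ioo 0 m, HasDerivAt F (r * c - r * Real.log r) r := by
    intro r hr
    have h1 : HasDerivAt (fun x : ℝ => x * Real.log x) (Real.log r + 1) r :=
      Real.hasDerivAt_mul_log hr.1.ne'
    have h2 : HasDerivAt (fun x : ℝ => x * (x * Real.log x))
        (1 * (r * Real.log r) + r * (Real.log r + 1)) r := (hasDerivAt_id r).mul h1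
    have h3 : HasDerivAt (fun x : ℝ => x^2/2*c + x^2/4)
        (r * c + r / 2) r := by
      have := ((hasDerivAt_pow 2 r).div_const 2).mul_const c
      have h4 := (hasDerivAt_pow 2 r).div_const 4
      exact (this.add h4).congr_deriv (by norm_num; ring)
    exact (h3.sub (h2.const_mul (1/2:ℝ))).congr_deriv (by ring)
  have hint : IntervalIntegrable (fun r : ℝ => r * c - r * Real.log r) volume 0 m :=
    (((continuous_id.mul continuous_const).sub Real.continuous_mul_log)).intervalIntegrable _ _
  rw [intervalIntegral.integral_eq_sub_of_hasDeriv_right_of_le hm.le hcont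
    (fun x hx => (hderiv x hx).hasDerivWithinAt) hint]
  have hF0 : F 0 = 0 := by simp [hF]
  rw [hF0, hF]
  ring

lemma polar_key (R : ℝ) (hR : 0 < R) (z : ℂ) :
    (∫ w in Metric.ball (0:ℂ) R, Real.log (norm (1 - z / w)))
      = ∫ r in Ioo (0:ℝ) R, r * (∫ θ in Ioo (-π) π,
          Real.log (norm (1 - z / (r * cexpI θ)))) := by
  set G : ℂ → ℝ := fun w => Real.log (norm (1 - z / w)) with hG
  rw [← MeasureTheory.integral_indicator measurableSet_ball]
  rw [← Complex.integral_comp_polarCoord_symm (Set.indicator (Metric.ball 0 R) G)]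
  have hσ : ∀ p : ℝ × ℝ, Complex.polarCoord.symm p = (p.1 : ℂ) * cexpI p.2 := by
    intro p
    rw [Complex.polarCoord_symm_apply, cexpI, Complex.exp_mul_I]
    push_cast
    ring
  have step1 : (∫ p in polarCoord.target, p.1 • Set.indicator (Metric.ball 0 R) G
      (Complex.polarCoord.symm p))
      = ∫ p in polarCoord.target, Set.indicator (Ioo (0:ℝ) R ×ˢ Ioo (-π) π)
          (fun p : ℝ×ℝ => p.1 * G ((p.1:ℂ) * cexpI p.2)) p := by
    refine setIntegral_congr_fun (polarCoord.open_target.measurableSet) fun p hp => ?_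
    rw [polarCoord_target] at hp
    obtain ⟨hp1, hp2⟩ := hp
    have habs : norm (Complex.polarCoord.symm p) = p.1 := by
      rw [Complex.norm_polarCoord_symm, abs_of_pos hp1]
    by_cases hlt : p.1 < R
    · rw [Set.indicator_of_mem, Set.indicator_of_mem, hσ, smul_eq_mul]
      · exact ⟨⟨hp1, hlt⟩, hp2⟩
      · rw [Metric.mem_ball, dist_zero_right, habs]
        exact hlt
    · rw [Set.indicator_of_notMem, Set.indicator_of_notMem, smul_zero]
      · intro hmem; exact hlt hmem.1.2
      · intro hmem
        rw [Metric.mem_ball, dist_zero_right, habs] at hmem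
        exact hlt hmem
  rw [step1]
  rw [polarCoord_target, setIntegral_indicator (measurableSet_Ioo.prod measurableSet_Ioo)]
  rw [Set.inter_eq_right.mpr (Set.prod_mono (Ioo_subset_Ioi_self) (subset_refl _))]
  rw [Measure.volume_eq_prod, ← Measure.prod_restrict]
  rw [integral_prod _ (integrable_main R hR z)]
  refine setIntegral_congr_fun measurableSet_Ioo fun r hr => ?_
  exact MeasureTheory.integral_const_mul r _

theorem stmt_3 (R : ℝ) (hR : 0 < R) (z : ℂ) :
    (‖z‖ < R →
      (2 / Real.pi) * (∫ w in Metric.ball (0:ℂ) R, Real.log (‖1 - z / w‖))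
        = ‖z‖ ^ 2) ∧
    (R ≤ ‖z‖ →
      (2 / Real.pi) * (∫ w in Metric.ball (0:ℂ) R, Real.log (‖1 - z / w‖))
        = R ^ 2 + 2 * R ^ 2 * Real.log (‖z‖ / R)) := by
  set ρ := norm z with hρ
  set η : ℝ → ℝ := fun r => r * (∫ θ in Ioo (-π) π,
      Real.log (norm (1 - z / (r * cexpI θ)))) with hη
  have hηi : IntegrableOn η (Ioo 0 R) volume := by
    have h := (integrable_main R hR z).integral_prod_left
    refine h.congr (Filter.Eventually.of_forall fun r => ?_)
    simp only [hη]
    exact MeasureTheory.integral_const_mul r _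
  have hII : IntervalIntegrable η volume 0 R :=
    (intervalIntegrable_iff_integrableOn_Ioo_of_le hR.le).mpr hηi
  have hval : (∫ w in Metric.ball (0:ℂ) R, Real.log (norm (1 - z / w)))
      = ∫ r in (0:ℝ)..R, η r := by
    rw [polar_key R hR z, intervalIntegral.integral_of_le hR.le, integral_Ioc_eq_integral_Ioo]
  constructor
  · intro hlt
    by_cases hz : z = 0
    · simp [hz, hρ]
    · have hρ0 : 0 < ρ := norm_pos_iff.mpr hz
      have hI1 : IntervalIntegrable η volume 0 ρ :=
        hII.mono_set (by rw [uIcc_of_le hρ0.le, uIcc_of_le hR.le]; exact Icc_subset_Icc le_rfl hlt.le)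
      have hI2 : IntervalIntegrable η volume ρ R :=
        hII.mono_set (by rw [uIcc_of_le hlt.le, uIcc_of_le hR.le]; exact Icc_subset_Icc hρ0.le le_rfl)
      have hsplit : (∫ r in (0:ℝ)..R, η r) = (∫ r in (0:ℝ)..ρ, η r) + ∫ r in ρ..R, η r :=
        (intervalIntegral.integral_add_adjacent_intervals hI1 hI2).symm
      have hright : (∫ r in ρ..R, η r) = 0 := by
        rw [intervalIntegral.integral_of_le hlt.le, integral_Ioc_eq_integral_Ioo]
        rw [setIntegral_congr_fun measurableSet_Ioo
          (fun r hr => by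
            simp only [hη, Pi.zero_apply]
            rw [inner_gt (hρ0.trans hr.1) hr.1, mul_zero] : EqOn η 0 _)]
        simp
      have hleft : (∫ r in (0:ℝ)..ρ, η r) = 2*π*(ρ^2/4) := by
        rw [intervalIntegral.integral_of_le hρ0.le, integral_Ioc_eq_integral_Ioo]
        rw [setIntegral_congr_fun measurableSet_Ioo
          (fun r hr => by
            simp only [hη]
            rw [inner_lt hr.1 hz hr.2]; ring :
            EqOn η (fun r => 2*π*(r * Real.log ρ - r * Real.log r)) _)]
        rw [← integral_Ioc_eq_integral_Ioo, ← intervalIntegral.integral_of_le hρ0.le,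
          intervalIntegral.integral_const_mul, ftc (Real.log ρ) ρ hρ0]
        ring
      rw [hval, hsplit, hright, hleft, add_zero]
      field_simp
      ring
  · intro hge
    have hz : z ≠ 0 := by
      intro h
      have h0 : ρ = 0 := by rw [hρ, h]; simp
      rw [h0] at hge; linarith
    have hρ0 : 0 < ρ := norm_pos_iff.mpr hz
    have hall : (∫ r in (0:ℝ)..R, η r)
        = ∫ r in (0:ℝ)..R, 2*π*(r * Real.log ρ - r * Real.log r) := by
      rw [intervalIntegral.integral_of_le hR.le, integral_Ioc_eq_integral_Ioo,
        intervalIntegral.integral_of_le hR.le, integral_Ioc_eq_integral_Ioo]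
      refine setIntegral_congr_fun measurableSet_Ioo fun r hr => ?_
      simp only [hη]
      rw [inner_lt hr.1 hz (lt_of_lt_of_le hr.2 hge)]; ring
    rw [hval, hall, intervalIntegral.integral_const_mul, ftc (Real.log ρ) R hR,
      Real.log_div hρ0.ne' hR.ne']
    field_simp
    ring

end StmtAux
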